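/- Let E = ⋃_{n∈ℕ} E_n be a locally convex direct limit of an increasing sequence of normed spaces over 𝕂 ∈ {ℝ, ℂ} with continuous inclusions, assumed Hausdorff, and let F be a locally convex space. A polynomial map f : E → F (a finite sum of continuous-on-each-step homogeneous polynomial maps) is continuous on E if and only if each restriction f|_{E_n} : E_n → F is continuous. -/

import Mathlib

open Metric

universe uF

lemma vander_extract (d : ℕ) :
    ∃ c : Matrix (Fin (d+1)) (Fin (d+1)) ℝ,
      ∀ (F : Type uF) [AddCommGroup F] [Module ℝ F] (G φ : Fin (d+1) → F),
        (∀ i : Fin (d+1), φ i = ∑ k : Fin (d+1), (((i : ℕ) : ℝ) ^ (k : ℕ)) • G k) →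
        ∀ k, G k = ∑ i, c k i • φ i := by
  set V : Matrix (Fin (d+1)) (Fin (d+1)) ℝ :=
    Matrix.vandermonde (fun i : Fin (d+1) => ((i : ℕ) : ℝ)) with hV
  have hinj : Function.Injective (fun i : Fin (d+1) => ((i : ℕ) : ℝ)) := by
    intro a b h
    exact Fin.ext (Nat.cast_injective h)
  have hdet : IsUnit V.det := by
    rw [isUnit_iff_ne_zero, hV, Ne, Matrix.det_vandermonde_eq_zero_iff]
    rintro ⟨i, j, hij, hne⟩
    exact hne (hinj hij)
  have hmul : V⁻¹ * V = 1 := Matrix.nonsing_inv_mul V hdet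
  refine ⟨V⁻¹, ?_⟩
  intro F _ _ G φ hφ k
  have : ∑ i, V⁻¹ k i • φ i = ∑ k', ((V⁻¹ * V) k k') • G k' := by
    simp only [hφ, Finset.smul_sum, smul_smul, Matrix.mul_apply, Finset.sum_smul]
    rw [Finset.sum_comm]
    simp [hV, Matrix.vandermonde]
  rw [this, hmul]
  simp [Matrix.one_apply]

lemma polyLip {𝕜 : Type*} [RCLike 𝕜] {X : Type*} [NormedAddCommGroup X] [NormedSpace 𝕜 X]
    {F : Type uF} [AddCommGroup F] [Module ℝ F] [Module 𝕜 F] [IsScalarTower ℝ 𝕜 F]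
    [TopologicalSpace F] [IsTopologicalAddGroup F] [ContinuousSMul 𝕜 F]
    (d : ℕ) (β : (k : Fin (d + 1)) → MultilinearMap 𝕜 (fun _ : Fin (k : ℕ) => X) F)
    (P : X → F) (hP : ∀ x, P x = ∑ k, β k fun _ => x) (hPc : Continuous P)
    (p : F → ℝ)
    (hpadd : ∀ x y, p (x + y) ≤ p x + p y)
    (hpsmul : ∀ (r : ℝ) (x : F), p (r • x) = |r| * p x)
    (hpnhds : {x : F | p x ≤ 1} ∈ nhds (0 : F)) (R : ℝ) :
    ∃ L : ℝ, 0 ≤ L ∧ ∀ v h : X, ‖v‖ ≤ R → ‖h‖ ≤ 1 →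
      p (P (v + h) - P v) ≤ L * ‖h‖ := by
  classical
  have hsm : ∀ (r : ℝ) (x : F), ((r : 𝕜)) • x = r • x :=
    fun r x => (RCLike.real_smul_eq_coe_smul r x).symm
  have hp0 : p 0 = 0 := by
    have := hpsmul 0 (0 : F)
    simpa using this
  have hpnonneg : ∀ x, 0 ≤ p x := by
    intro x
    have h1 := hpadd x (-x)
    have h2 : p (-x) = p x := by
      have := hpsmul (-1) x
      simpa using this
    rw [add_neg_cancel, hp0, h2] at h1
    linarith
  have hpsum : ∀ {ι : Type} (s : Finset ι) (g : ι → F),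
      p (∑ i ∈ s, g i) ≤ ∑ i ∈ s, p (g i) := by
    intro ι s g
    induction s using Finset.cons_induction with
    | empty => simp [hp0]
    | cons a s ha ih =>
      rw [Finset.sum_cons, Finset.sum_cons]
      exact (hpadd _ _).trans (add_le_add le_rfl ih)
  -- diagonal maps
  set g : Fin (d+1) → X → F := fun k y => β k (fun _ => y) with hg
  have hgsmul : ∀ (k : Fin (d+1)) (r : ℝ) (y : X),
      g k (((r : ℝ) : 𝕜) • y) = (r ^ (k : ℕ)) • g k y := by
    intro k r y
    have h1 : g k (((r : ℝ) : 𝕜) • y)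
        = (∏ _i : Fin (k : ℕ), ((r : ℝ) : 𝕜)) • β k (fun _ => y) :=
      (β k).map_smul_univ (fun _ => ((r : ℝ) : 𝕜)) (fun _ => y)
    rw [h1, Finset.prod_const, Finset.card_univ, Fintype.card_fin,
      ← RCLike.ofReal_pow, hsm]
  haveI : ContinuousSMul ℝ F := by
    refine ⟨?_⟩
    have h2 : (fun q : ℝ × F => q.1 • q.2) = fun q : ℝ × F => ((q.1 : 𝕜)) • q.2 := by
      funext q; rw [hsm]
    rw [h2]
    exact (RCLike.continuous_ofReal.comp continuous_fst).smul continuous_snd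
  have hPdiag : ∀ (y : X) (r : ℝ),
      P (((r : ℝ) : 𝕜) • y) = ∑ k : Fin (d+1), (r ^ (k : ℕ)) • g k y := by
    intro y r
    rw [hP]
    exact Finset.sum_congr rfl fun k _ => hgsmul k r y
  obtain ⟨c, hc⟩ := vander_extract d
  have hg_eq : ∀ (k : Fin (d+1)) (y : X),
      g k y = ∑ i, c k i • P (((((i : ℕ) : ℝ)) : 𝕜) • y) := by
    intro k y
    exact hc F (fun k => g k y) (fun i => P (((((i : ℕ) : ℝ)) : 𝕜) • y))
      (fun i => hPdiag y _) k
  have hgc : ∀ k, Continuous (g k) := by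
    intro k
    have h1 : (g k) = fun y => ∑ i, c k i • P (((((i : ℕ) : ℝ)) : 𝕜) • y) :=
      funext fun y => hg_eq k y
    rw [h1]
    exact continuous_finset_sum _ fun i _ =>
      ((hPc.comp (continuous_const_smul _)).const_smul _)
  have hg0 : ∀ k : Fin (d+1), (k : ℕ) ≠ 0 → g k 0 = 0 := by
    intro k hk
    have i0 : Fin (k : ℕ) := ⟨0, Nat.pos_of_ne_zero hk⟩
    have h1 : (fun _ : Fin (k : ℕ) => (0 : X)) =
        Function.update (fun _ => (0 : X)) i0 0 := by
      funext i
      simp [Function.update]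
    show β k (fun _ => (0 : X)) = 0
    rw [h1]
    exact (β k).map_update_zero _ _
  -- radii of boundedness
  have hr' : ∀ k : Fin (d+1), ∃ rk : ℝ, 0 < rk ∧
      ((k : ℕ) ≠ 0 → ∀ y : X, ‖y‖ ≤ rk → p (g k y) ≤ 1) := by
    intro k
    by_cases hk : (k : ℕ) = 0
    · exact ⟨1, one_pos, fun h => absurd hk h⟩
    · have h1 : {x : F | p x ≤ 1} ∈ nhds (g k 0) := by rw [hg0 k hk]; exact hpnhds
      have h2 := ((hgc k).continuousAt (x := (0:X))).preimage_mem_nhds h1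
      rw [Metric.mem_nhds_iff] at h2
      obtain ⟨ε, hε, hball⟩ := h2
      refine ⟨ε / 2, by linarith, fun _ y hy => ?_⟩
      exact hball (by rw [Metric.mem_ball, dist_zero_right]; linarith)
  choose r hr0 hr1 using hr'
  set Q : ℝ := |R| + d + 1 with hQdef
  have hQ : 0 < Q := by positivity
  set B : Fin (d+1) → ℝ :=
    fun k => if (k : ℕ) = 0 then p (g k 0) else (Q / r k) ^ (k : ℕ) with hBdef
  have hBnn : ∀ k, 0 ≤ B k := by
    intro k
    by_cases hk : (k : ℕ) = 0
    · simp only [hBdef, if_pos hk]; exact hpnonneg _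
    · simp only [hBdef, if_neg hk]
      exact pow_nonneg (div_nonneg hQ.le (hr0 k).le) _
  have hgB : ∀ (k : Fin (d+1)) (y : X), ‖y‖ ≤ Q → p (g k y) ≤ B k := by
    intro k y hy
    by_cases hk : (k : ℕ) = 0
    · simp only [hBdef, if_pos hk]
      have h1 : g k y = g k 0 := by
        show β k (fun _ => y) = β k (fun _ => (0:X))
        congr 1
        funext i
        exact absurd i.isLt (by omega)
      rw [h1]
    · simp only [hBdef, if_neg hk]
      have hrk := hr0 k
      have hz : ‖((r k / Q : ℝ) : 𝕜) • y‖ ≤ r k := by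
        rw [norm_smul, RCLike.norm_ofReal, abs_of_pos (div_pos hrk hQ)]
        calc r k / Q * ‖y‖ ≤ r k / Q * Q := by
              gcongr
          _ = r k := by field_simp
      have h1 : p (g k (((r k / Q : ℝ) : 𝕜) • y)) ≤ 1 := hr1 k hk _ hz
      have h2 : g k y = ((Q / r k) ^ (k : ℕ)) • g k (((r k / Q : ℝ) : 𝕜) • y) := by
        rw [← hgsmul k (Q / r k) _, smul_smul, ← RCLike.ofReal_mul]
        have h3 : Q / r k * (r k / Q) = 1 := by field_simp
        rw [h3]
        norm_num
      rw [h2, hpsmul, abs_of_nonneg (pow_nonneg (div_pos hQ hrk).le _)]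
      calc (Q / r k) ^ (k : ℕ) * p (g k (((r k / Q : ℝ) : 𝕜) • y))
          ≤ (Q / r k) ^ (k : ℕ) * 1 :=
            mul_le_mul_of_nonneg_left h1 (pow_nonneg (div_pos hQ hrk).le _)
        _ = (Q / r k) ^ (k : ℕ) := mul_one _
  set Λ : ℝ := ∑ k, B k with hΛdef
  have hΛnn : 0 ≤ Λ := Finset.sum_nonneg fun k _ => hBnn k
  have hPB : ∀ y : X, ‖y‖ ≤ Q → p (P y) ≤ Λ := by
    intro y hy
    rw [hP]
    exact (hpsum _ _).trans (Finset.sum_le_sum fun k _ => hgB k y hy)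
  -- expansion coefficients of the difference
  have hpiece : ∀ (v h : X) (t : ℝ) (k : Fin (d+1)) (S : Finset (Fin (k : ℕ))),
      β k (S.piecewise (fun _ => ((t : ℝ) : 𝕜) • h) (fun _ => v))
        = (t ^ S.card) • β k (S.piecewise (fun _ => h) (fun _ => v)) := by
    intro v h t k S
    have h3 : S.piecewise (fun _ => ((t : ℝ) : 𝕜) • h) (fun _ => v)
        = S.piecewise (fun i => ((t : ℝ) : 𝕜) • (S.piecewise (fun _ => h) (fun _ => v)) i)
            (S.piecewise (fun _ => h) (fun _ => v)) := by
      funext i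
      by_cases hi : i ∈ S
      · simp [Finset.piecewise_eq_of_mem _ _ _ hi]
      · simp [Finset.piecewise_eq_of_notMem _ _ _ hi]
    rw [h3, (β k).map_piecewise_smul, Finset.prod_const, ← RCLike.ofReal_pow, hsm]
  set e : X → X → Fin (d+1) → F := fun v h jj =>
    ∑ k : Fin (d+1), ∑ S ∈ Finset.univ.filter
      (fun S : Finset (Fin (k : ℕ)) => S.card = (jj : ℕ)),
        β k (S.piecewise (fun _ => h) (fun _ => v)) with hedef
  have fib : ∀ (k : Fin (d+1)) (G : Finset (Fin (k : ℕ)) → F),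
      ∑ jj : Fin (d+1), ∑ S ∈ Finset.univ.filter
        (fun S : Finset (Fin (k : ℕ)) => S.card = (jj : ℕ)), G S
      = ∑ S : Finset (Fin (k : ℕ)), G S := by
    intro k G
    rw [Fin.sum_univ_eq_sum_range (fun jjn => ∑ S ∈ Finset.univ.filter
      (fun S : Finset (Fin (k : ℕ)) => S.card = jjn), G S) (d+1)]
    refine Finset.sum_fiberwise_of_maps_to (fun S _ => Finset.mem_range.mpr ?_) G
    have h1 := Finset.card_le_univ S
    simp only [Finset.card_univ, Fintype.card_fin] at h1
    have h2 := k.isLt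
    omega
  have claimA : ∀ (v h : X) (t : ℝ),
      P (v + ((t : ℝ) : 𝕜) • h) = ∑ jj : Fin (d+1), (t ^ (jj : ℕ)) • e v h jj := by
    intro v h t
    calc P (v + ((t : ℝ) : 𝕜) • h)
        = ∑ k : Fin (d+1), ∑ S : Finset (Fin (k : ℕ)),
            (t ^ S.card) • β k (S.piecewise (fun _ => h) (fun _ => v)) := by
          rw [hP]
          refine Finset.sum_congr rfl fun k _ => ?_
          have h1 : (fun _ : Fin (k : ℕ) => v + ((t : ℝ) : 𝕜) • h)
              = (fun _ => ((t : ℝ) : 𝕜) • h) + (fun _ => v) := by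
            funext i; simp [add_comm]
          rw [h1, (β k).map_add_univ]
          exact Finset.sum_congr rfl fun S _ => hpiece v h t k S
      _ = ∑ k : Fin (d+1), ∑ jj : Fin (d+1), ∑ S ∈ Finset.univ.filter
            (fun S : Finset (Fin (k : ℕ)) => S.card = (jj : ℕ)),
              (t ^ (jj : ℕ)) • β k (S.piecewise (fun _ => h) (fun _ => v)) := by
          refine Finset.sum_congr rfl fun k _ => ?_
          rw [← fib k (fun S => (t ^ S.card) • β k (S.piecewise (fun _ => h) (fun _ => v)))]
          refine Finset.sum_congr rfl fun jj _ => Finset.sum_congr rfl fun S hS => ?_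
          rw [(Finset.mem_filter.mp hS).2]
      _ = ∑ jj : Fin (d+1), ∑ k : Fin (d+1), ∑ S ∈ Finset.univ.filter
            (fun S : Finset (Fin (k : ℕ)) => S.card = (jj : ℕ)),
              (t ^ (jj : ℕ)) • β k (S.piecewise (fun _ => h) (fun _ => v)) :=
          Finset.sum_comm
      _ = ∑ jj : Fin (d+1), (t ^ (jj : ℕ)) • e v h jj := by
          refine Finset.sum_congr rfl fun jj _ => ?_
          rw [hedef, Finset.smul_sum]
          exact Finset.sum_congr rfl fun k _ => (Finset.smul_sum).symm
  have hEsmul : ∀ (v h : X) (s : ℝ) (jj : Fin (d+1)),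
      e v (((s : ℝ) : 𝕜) • h) jj = (s ^ (jj : ℕ)) • e v h jj := by
    intro v h s jj
    rw [hedef, Finset.smul_sum]
    refine Finset.sum_congr rfl fun k _ => ?_
    rw [Finset.smul_sum]
    refine Finset.sum_congr rfl fun S hS => ?_
    rw [hpiece v h s k S, (Finset.mem_filter.mp hS).2]
  set K : Fin (d+1) → ℝ := fun jj => (∑ i, |c jj i|) * Λ with hKdef
  have hKnn : ∀ jj, 0 ≤ K jj := by
    intro jj
    exact mul_nonneg (Finset.sum_nonneg fun i _ => abs_nonneg _) hΛnn
  have hEbound : ∀ (v h : X), ‖v‖ ≤ R → ‖h‖ ≤ 1 → ∀ jj, p (e v h jj) ≤ K jj := by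
    intro v h hv hh jj
    have hφ : ∀ i : Fin (d+1), P (v + ((((i : ℕ) : ℝ)) : 𝕜) • h)
        = ∑ k : Fin (d+1), ((((i : ℕ) : ℝ)) ^ (k : ℕ)) • e v h k :=
      fun i => claimA v h ((i : ℕ) : ℝ)
    have h1 := hc F (e v h) (fun i => P (v + ((((i : ℕ) : ℝ)) : 𝕜) • h)) hφ jj
    rw [h1]
    refine (hpsum _ _).trans ?_
    simp only [hKdef]
    rw [Finset.sum_mul]
    refine Finset.sum_le_sum fun i _ => ?_
    rw [hpsmul]
    refine mul_le_mul_of_nonneg_left (hPB _ ?_) (abs_nonneg _)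
    calc ‖v + ((((i : ℕ) : ℝ)) : 𝕜) • h‖ ≤ ‖v‖ + ‖((((i : ℕ) : ℝ)) : 𝕜) • h‖ :=
          norm_add_le _ _
      _ ≤ R + d * 1 := by
          refine add_le_add hv ?_
          rw [norm_smul, RCLike.norm_ofReal, abs_of_nonneg (Nat.cast_nonneg _)]
          refine mul_le_mul ?_ hh (norm_nonneg _) (by positivity)
          exact_mod_cast Nat.lt_succ_iff.mp i.isLt
      _ ≤ Q := by
          rw [hQdef]
          have := le_abs_self R
          linarith
  refine ⟨∑ jj, K jj, Finset.sum_nonneg fun jj _ => hKnn jj, ?_⟩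
  intro v h hv hh
  by_cases hh0 : h = 0
  · subst hh0
    simp only [add_zero, sub_self, norm_zero, mul_zero, hp0]
    exact le_rfl
  · have hn1 : 0 < ‖h‖ := norm_pos_iff.mpr hh0
    set hh' : X := ((‖h‖⁻¹ : ℝ) : 𝕜) • h with hhh'
    have h_eq : h = ((‖h‖ : ℝ) : 𝕜) • hh' := by
      rw [hhh', smul_smul, ← RCLike.ofReal_mul, mul_inv_cancel₀ hn1.ne']
      norm_num
    have hunit : ‖hh'‖ ≤ 1 := by
      rw [hhh', norm_smul, RCLike.norm_ofReal, abs_of_pos (inv_pos.mpr hn1),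
        inv_mul_cancel₀ hn1.ne']
    have h1 : P (v + h) = ∑ jj : Fin (d+1), e v h jj := by
      have := claimA v h 1
      simpa using this
    have h0 : P v = e v h 0 := by
      have := claimA v h 0
      simp only [RCLike.ofReal_zero, zero_smul, add_zero] at this
      rw [this, Fin.sum_univ_succ]
      simp
    have hdiff : P (v + h) - P v = ∑ jj ∈ Finset.univ.erase (0 : Fin (d+1)), e v h jj := by
      rw [h1, h0, ← Finset.add_sum_erase _ _ (Finset.mem_univ (0 : Fin (d+1)))]
      abel
    rw [hdiff]
    refine (hpsum _ _).trans ?_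
    have hjb : ∀ jj ∈ Finset.univ.erase (0 : Fin (d+1)), p (e v h jj) ≤ K jj * ‖h‖ := by
      intro jj hjj
      have hj0 : (jj : ℕ) ≠ 0 := by
        intro hcon
        exact (Finset.mem_erase.mp hjj).1 (Fin.ext hcon)
      have h2 : e v h jj = (‖h‖ ^ (jj : ℕ)) • e v hh' jj := by
        conv_lhs => rw [h_eq]
        exact hEsmul v hh' ‖h‖ jj
      rw [h2, hpsmul, abs_of_nonneg (pow_nonneg (norm_nonneg h) _)]
      calc ‖h‖ ^ (jj : ℕ) * p (e v hh' jj) ≤ ‖h‖ ^ (jj : ℕ) * K jj :=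
            mul_le_mul_of_nonneg_left (hEbound v hh' hv hunit jj)
              (pow_nonneg (norm_nonneg h) _)
        _ ≤ ‖h‖ * K jj := by
            have h3 : ‖h‖ ^ (jj : ℕ) ≤ ‖h‖ := by
              calc ‖h‖ ^ (jj : ℕ) ≤ ‖h‖ ^ 1 :=
                    pow_le_pow_of_le_one (norm_nonneg h) hh
                      (Nat.one_le_iff_ne_zero.mpr hj0)
                _ = ‖h‖ := pow_one _
            exact mul_le_mul_of_nonneg_right h3 (hKnn jj)
        _ = K jj * ‖h‖ := mul_comm _ _
    calc ∑ jj ∈ Finset.univ.erase (0 : Fin (d+1)), p (e v h jj)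
        ≤ ∑ jj ∈ Finset.univ.erase (0 : Fin (d+1)), K jj * ‖h‖ := Finset.sum_le_sum hjb
      _ ≤ ∑ jj : Fin (d+1), K jj * ‖h‖ :=
          Finset.sum_le_sum_of_subset_of_nonneg (Finset.erase_subset _ _)
            (fun _ _ _ => mul_nonneg (hKnn _) (norm_nonneg _))
      _ = (∑ jj, K jj) * ‖h‖ := (Finset.sum_mul _ _ _).symm

lemma psum_le {F : Type uF} [AddCommGroup F] (p : F → ℝ) (hp0 : p 0 = 0)
    (hpadd : ∀ x y, p (x + y) ≤ p x + p y) {ι : Type} (s : Finset ι) (g : ι → F) :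
    p (∑ i ∈ s, g i) ≤ ∑ i ∈ s, p (g i) := by
  classical
  induction s using Finset.cons_induction with
  | empty => simp [hp0]
  | cons a s ha ih =>
    rw [Finset.sum_cons, Finset.sum_cons]
    exact (hpadd _ _).trans (add_le_add le_rfl ih)


/-- Corollary 2.1: continuity of polynomials on LB-spaces.  Let `𝕜 ∈ {ℝ, ℂ}` and let `E`
be the Hausdorff locally convex direct limit of an increasing sequence of normed spaces
`X n` over `𝕜` (realized by injective continuous linear maps `u n : X n → E` compatible
with continuous bonding maps `j n`; the direct limit topology is encoded by requiring
every basic set `V(δ₁, δ₂, …)` to be a `0`-neighborhood).  A polynomial map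
`f : E → F` (a finite sum of homogeneous multilinear evaluations) with values in a
locally convex space `F` is continuous if and only if each restriction `f ∘ u n` is
continuous. -/
theorem stmt17 {𝕜 : Type*} [RCLike 𝕜] {E : Type*} [AddCommGroup E] [Module 𝕜 E]
    [TopologicalSpace E] [IsTopologicalAddGroup E] [ContinuousSMul 𝕜 E] [T2Space E]
    {F : Type*} [AddCommGroup F] [Module ℝ F] [Module 𝕜 F] [IsScalarTower ℝ 𝕜 F]
    [TopologicalSpace F] [IsTopologicalAddGroup F] [ContinuousSMul 𝕜 F]
    [LocallyConvexSpace ℝ F]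
    (X : ℕ → Type*) [∀ n, NormedAddCommGroup (X n)] [∀ n, NormedSpace 𝕜 (X n)]
    (u : ∀ n, X n →ₗ[𝕜] E) (huinj : ∀ n, Function.Injective (u n))
    (hucont : ∀ n, Continuous fun y : X n => u n y)
    (j : ∀ n, X n →ₗ[𝕜] X (n + 1)) (hjcont : ∀ n, Continuous fun x : X n => j n x)
    (hcomp : ∀ n (x : X n), u (n + 1) (j n x) = u n x)
    (hunion : ∀ x : E, ∃ n, x ∈ Set.range (u n))
    (hnhds : ∀ δ : ℕ → ℝ, (∀ i, 0 < δ i) →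
      {x : E | ∃ (m : ℕ) (w : (i : Fin m) → X i.val),
          (∀ i, ‖w i‖ < δ i.val) ∧ x = ∑ i, u i.val (w i)} ∈ nhds (0 : E))
    (f : E → F) (d : ℕ)
    (β : (k : Fin (d + 1)) → MultilinearMap 𝕜 (fun _ : Fin (k : ℕ) => E) F)
    (hfpoly : ∀ x : E, f x = ∑ k, β k fun _ => x) :
    Continuous f ↔ ∀ n, Continuous fun y : X n => f (u n y) := by
  constructor
  · intro hf n
    exact hf.comp (hucont n)
  intro hres
  classical
  -- bonding maps as continuous linear maps
  let jc : ∀ n, X n →L[𝕜] X (n + 1) := fun n => ⟨j n, hjcont n⟩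
  let Jle : ∀ m n, m ≤ n → (X m →L[𝕜] X n) := fun m n hmn =>
    Nat.leRecOn hmn (fun {k} g => (jc k).comp g) (ContinuousLinearMap.id 𝕜 (X m))
  have hJle_self : ∀ m (x : X m), Jle m m le_rfl x = x := by
    intro m x
    have h1 : Jle m m le_rfl = ContinuousLinearMap.id 𝕜 (X m) := Nat.leRecOn_self _
    rw [h1]
    rfl
  have hJle_succ : ∀ m n (h : m ≤ n) (h2 : m ≤ n + 1) (x : X m),
      Jle m (n + 1) h2 x = j n (Jle m n h x) := by
    intro m n h h2 x
    have h1 : Jle m (n+1) h2 = (jc n).comp (Jle m n h) := Nat.leRecOn_succ h _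
    rw [h1]
    rfl
  have hJu : ∀ m n (h : m ≤ n) (x : X m), u n (Jle m n h x) = u m x := by
    intro m n h x
    induction n, h using Nat.le_induction with
    | base => rw [hJle_self]
    | succ n hmn ih =>
      rw [hJle_succ m n hmn, hcomp, ih]
  rw [continuous_iff_continuousAt]
  intro a
  obtain ⟨N, a0, ha0⟩ : ∃ (N : ℕ) (a0 : X N), u N a0 = a := by
    obtain ⟨N, x, hx⟩ := hunion a
    exact ⟨N, x, hx⟩
  rw [ContinuousAt, ← tendsto_sub_nhds_zero_iff, Filter.tendsto_def]
  intro s hs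
  obtain ⟨t, ⟨ht, htconv⟩, hts⟩ := (LocallyConvexSpace.convex_basis_zero ℝ F).mem_iff.mp hs
  set U : Set F := t ∩ -t with hUdef
  have hUnhds : U ∈ nhds (0 : F) := by
    refine Filter.inter_mem ht ?_
    have h2 : Neg.neg ⁻¹' t ∈ nhds (0 : F) :=
      ((continuous_neg (G := F)).continuousAt (x := (0 : F))).preimage_mem_nhds
        (by simpa using ht)
    exact h2
  have hU0 : (0 : F) ∈ U := mem_of_mem_nhds hUnhds
  have hUconv : Convex ℝ U := htconv.inter htconv.neg
  have hUsym : ∀ x ∈ U, -x ∈ U := by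
    rintro x ⟨h1, h2⟩
    exact ⟨Set.mem_neg.mp h2, by simpa [Set.mem_neg] using h1⟩
  haveI : ContinuousSMul ℝ F := by
    refine ⟨?_⟩
    have h2 : (fun q : ℝ × F => q.1 • q.2) = fun q : ℝ × F => ((q.1 : 𝕜)) • q.2 := by
      funext q
      rw [← RCLike.real_smul_eq_coe_smul]
    rw [h2]
    exact (RCLike.continuous_ofReal.comp continuous_fst).smul continuous_snd
  have habs : Absorbent ℝ U := absorbent_nhds_zero hUnhds
  set p : F → ℝ := gauge U with hpdef
  have hpadd : ∀ x y, p (x + y) ≤ p x + p y := fun x y => gauge_add_le hUconv habs x y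
  have hpsmul : ∀ (r : ℝ) (x : F), p (r • x) = |r| * p x := by
    intro r x
    rcases le_or_gt 0 r with hr | hr
    · rw [hpdef, gauge_smul_of_nonneg hr, abs_of_nonneg hr, smul_eq_mul]
    · have h3 : r • x = -((-r) • x) := by rw [neg_smul, neg_neg]
      rw [hpdef, h3, gauge_neg hUsym, gauge_smul_of_nonneg (by linarith), smul_eq_mul,
        abs_of_neg hr]
  have hp0 : p 0 = 0 := by
    have := hpsmul 0 0
    simpa using this
  have hpnhds : {x : F | p x ≤ 1} ∈ nhds (0 : F) :=
    Filter.mem_of_superset hUnhds fun x hx => gauge_le_one_of_mem hx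
  -- norm data
  set M : ℕ → ℕ := fun n => max n N with hMdef
  have hnM : ∀ n, n ≤ M n := fun n => le_max_left n N
  have hNM : ∀ n, N ≤ M n := fun n => le_max_right n N
  set Cst : ℕ → ℕ → ℝ := fun i n => if h : i ≤ M n then ‖Jle i (M n) h‖ else 0 with hCdef
  have hCst0 : ∀ i n, 0 ≤ Cst i n := by
    intro i n
    by_cases h : i ≤ M n
    · simp only [hCdef, dif_pos h]
      exact norm_nonneg _
    · simp only [hCdef, dif_neg h]
      exact le_rfl
  set R : ℕ → ℝ := fun n => ‖Jle N (M n) (hNM n) a0‖ + ∑ i ∈ Finset.range n, Cst i n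
    with hRdef
  -- Lipschitz constants on balls from `polyLip`
  have hLex : ∀ n : ℕ, ∃ L : ℝ, 0 ≤ L ∧ ∀ v h : X (M n), ‖v‖ ≤ R n → ‖h‖ ≤ 1 →
      p (f (u (M n) (v + h)) - f (u (M n) v)) ≤ L * ‖h‖ := by
    intro n
    refine polyLip d (fun k => (β k).compLinearMap (fun _ => u (M n)))
      (fun y => f (u (M n) y)) ?_ (hres (M n)) p hpadd hpsmul hpnhds (R n)
    intro x
    show f (u (M n) x) = _
    rw [hfpoly]
    rfl
  choose L hL0 hL using hLex
  set δ : ℕ → ℝ := fun n => min 1 ((2 : ℝ)⁻¹ ^ (n + 2) / ((1 + L n) * (1 + Cst n n)))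
    with hδdef
  have hδpos : ∀ n, 0 < δ n := by
    intro n
    refine lt_min one_pos (div_pos (by positivity) ?_)
    have h1 := hL0 n
    have h2 := hCst0 n n
    positivity
  have hδ1 : ∀ n, δ n ≤ 1 := fun n => min_le_left _ _
  have hδmin : ∀ n, δ n ≤ (2 : ℝ)⁻¹ ^ (n + 2) / ((1 + L n) * (1 + Cst n n)) :=
    fun n => min_le_right _ _
  have hVmem := hnhds δ hδpos
  have hmap : Filter.Tendsto (fun x : E => x - a) (nhds a) (nhds (0 : E)) := by
    have h1 := (continuous_id.sub (continuous_const (y := a))).tendsto a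
    convert h1 using 2
    · rfl
    · exact (sub_self a).symm
  refine Filter.mem_of_superset (hmap hVmem) ?_
  rintro x ⟨m, w, hw, hsum⟩
  have hxa : x = a + ∑ i : Fin m, u i.val (w i) := by
    have h9 : x - a = ∑ i : Fin m, u i.val (w i) := hsum
    rw [← h9]
    abel
  -- extended family of increments
  set w' : ∀ i : ℕ, X i := fun i => if h : i < m then w ⟨i, h⟩ else 0 with hw'def
  have hw1 : ∀ i, ‖w' i‖ ≤ δ i := by
    intro i
    by_cases h : i < m
    · simp only [hw'def, dif_pos h]
      exact (hw ⟨i, h⟩).le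
    · simp only [hw'def, dif_neg h, norm_zero]
      exact (hδpos i).le
  set S : ℕ → E := fun n => ∑ i ∈ Finset.range n, u i (w' i) with hSdef
  have hSm : a + S m = x := by
    rw [hxa]
    congr 1
    have hS' : S m = ∑ i ∈ Finset.range m, u i (w' i) := rfl
    rw [hS', ← Fin.sum_univ_eq_sum_range (fun i => u i (w' i)) m]
    refine Finset.sum_congr rfl fun i _ => ?_
    simp only [hw'def, dif_pos i.isLt]
  set G : ℕ → F := fun n => f (a + S n) with hGdef
  have htel : f x - f a = ∑ n ∈ Finset.range m, (G (n + 1) - G n) := by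
    rw [Finset.sum_range_sub G m]
    have h1 : G m = f x := by
      rw [show G m = f (a + S m) from rfl, hSm]
    have h2 : G 0 = f a := by
      rw [show G 0 = f (a + S 0) from rfl, show S 0 = (0 : E) from rfl, add_zero]
    rw [h1, h2]
  -- each increment is small
  have hinc : ∀ n ∈ Finset.range m, p (G (n + 1) - G n) ≤ (2 : ℝ)⁻¹ ^ (n + 2) := by
    intro n _
    set Jv : ∀ i : ℕ, X i → X (M n) :=
      (fun i x => if h : i ≤ M n then Jle i (M n) h x else 0) with hJvdef
    have hJv_u : ∀ i (hi : i ≤ M n) (x : X i), u (M n) (Jv i x) = u i x := by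
      intro i hi x
      simp only [hJvdef, dif_pos hi]
      exact hJu i (M n) hi x
    have hJv_norm : ∀ i (x : X i), ‖Jv i x‖ ≤ Cst i n * ‖x‖ := by
      intro i x
      by_cases h : i ≤ M n
      · simp only [hJvdef, hCdef, dif_pos h]
        exact (Jle i (M n) h).le_opNorm x
      · simp only [hJvdef, hCdef, dif_neg h, norm_zero]
        simp
    set A : X (M n) := Jle N (M n) (hNM n) a0 with hAdef
    set σ : X (M n) := ∑ i ∈ Finset.range n, Jv i (w' i) with hσdef
    have hta : u (M n) A = a := by
      rw [hAdef, hJu N (M n) (hNM n) a0, ha0]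
    have htσ : u (M n) σ = S n := by
      rw [hσdef, map_sum, show S n = ∑ i ∈ Finset.range n, u i (w' i) from rfl]
      refine Finset.sum_congr rfl fun i hi => ?_
      exact hJv_u i ((Finset.mem_range.mp hi).le.trans (hnM n)) (w' i)
    have hpoint1 : a + S n = u (M n) (A + σ) := by
      rw [map_add, hta, htσ]
    have hpoint2 : a + S (n + 1) = u (M n) ((A + σ) + Jv n (w' n)) := by
      have h5 : S (n + 1) = S n + u n (w' n) := Finset.sum_range_succ _ n
      rw [h5, map_add, ← hpoint1, hJv_u n (hnM n), ← add_assoc]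
    have hG2 : G (n + 1) - G n
        = f (u (M n) ((A + σ) + Jv n (w' n))) - f (u (M n) (A + σ)) := by
      rw [show G (n + 1) - G n = f (a + S (n + 1)) - f (a + S n) from rfl,
        hpoint1, hpoint2]
    have hvb : ‖A + σ‖ ≤ R n := by
      refine (norm_add_le _ _).trans ?_
      rw [show R n = ‖Jle N (M n) (hNM n) a0‖ + ∑ i ∈ Finset.range n, Cst i n from rfl]
      refine add_le_add le_rfl ?_
      refine (norm_sum_le _ _).trans ?_
      refine Finset.sum_le_sum fun i _ => ?_
      calc ‖Jv i (w' i)‖ ≤ Cst i n * ‖w' i‖ := hJv_norm i _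
        _ ≤ Cst i n * 1 :=
            mul_le_mul_of_nonneg_left ((hw1 i).trans (hδ1 i)) (hCst0 i n)
        _ = Cst i n := mul_one _
    have hhb : ‖Jv n (w' n)‖ ≤ (1 + Cst n n) * δ n := by
      calc ‖Jv n (w' n)‖ ≤ Cst n n * ‖w' n‖ := hJv_norm n _
        _ ≤ Cst n n * δ n := mul_le_mul_of_nonneg_left (hw1 n) (hCst0 n n)
        _ ≤ (1 + Cst n n) * δ n :=
            mul_le_mul_of_nonneg_right (by linarith [hCst0 n n]) (hδpos n).le
    have hq : (0 : ℝ) < (2 : ℝ)⁻¹ ^ (n + 2) := by positivity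
    have hq1 : (2 : ℝ)⁻¹ ^ (n + 2) ≤ 1 := by
      apply pow_le_one₀ <;> norm_num
    have hLpos : (0 : ℝ) < 1 + L n := by linarith [hL0 n]
    have hCpos : (0 : ℝ) < 1 + Cst n n := by linarith [hCst0 n n]
    have hkey : (1 + Cst n n) * δ n ≤ (2 : ℝ)⁻¹ ^ (n + 2) / (1 + L n) := by
      have h6 := hδmin n
      rw [div_mul_eq_div_div] at h6
      calc (1 + Cst n n) * δ n
          ≤ (1 + Cst n n) * ((2 : ℝ)⁻¹ ^ (n + 2) / (1 + L n) / (1 + Cst n n)) :=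
            mul_le_mul_of_nonneg_left h6 hCpos.le
        _ = (2 : ℝ)⁻¹ ^ (n + 2) / (1 + L n) := by
            field_simp
    have hh1 : ‖Jv n (w' n)‖ ≤ 1 := by
      refine (hhb.trans hkey).trans ?_
      rw [div_le_one hLpos]
      linarith [hL0 n]
    rw [hG2]
    calc p (f (u (M n) ((A + σ) + Jv n (w' n))) - f (u (M n) (A + σ)))
        ≤ L n * ‖Jv n (w' n)‖ := hL n (A + σ) (Jv n (w' n)) hvb hh1
      _ ≤ L n * ((2 : ℝ)⁻¹ ^ (n + 2) / (1 + L n)) :=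
          mul_le_mul_of_nonneg_left (hhb.trans hkey) (hL0 n)
      _ = (2 : ℝ)⁻¹ ^ (n + 2) * (L n / (1 + L n)) := by ring
      _ ≤ (2 : ℝ)⁻¹ ^ (n + 2) * 1 := by
          refine mul_le_mul_of_nonneg_left ?_ hq.le
          rw [div_le_one hLpos]
          linarith
      _ = (2 : ℝ)⁻¹ ^ (n + 2) := mul_one _
  -- conclude
  have hfinal : p (f x - f a) < 1 := by
    rw [htel]
    calc p (∑ n ∈ Finset.range m, (G (n + 1) - G n))
        ≤ ∑ n ∈ Finset.range m, p (G (n + 1) - G n) := psum_le p hp0 hpadd _ _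
      _ ≤ ∑ n ∈ Finset.range m, (2 : ℝ)⁻¹ ^ (n + 2) := Finset.sum_le_sum hinc
      _ = (∑ n ∈ Finset.range m, (1 / 2 : ℝ) ^ n) * (1 / 4) := by
          rw [Finset.sum_mul]
          refine Finset.sum_congr rfl fun n _ => ?_
          rw [pow_add]
          norm_num
      _ ≤ 2 * (1 / 4) := mul_le_mul_of_nonneg_right (sum_geometric_two_le m) (by norm_num)
      _ < 1 := by norm_num
  have hmem : f x - f a ∈ U :=
    gauge_lt_one_subset_self hUconv hU0 habs hfinal
  exact hts hmem.1
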